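/- Let I be a monomial ideal with linear quotients and regular decomposition function g in a skew polynomial ring. Then for all u ∈ M(I) and all s, t ∈ set(u), one has g(x_s * g(x_t * u)) = g(x_s * x_t * u) = g(x_t * g(x_s * u)). -/
import Mathlib


open Finset

/-- `IsDecomp u a j` : the `j`-th generator is the value of the decomposition function at the
monomial `x^a`, i.e. `u j` `*`-divides `a` and `j` is minimal with this property
(so `g(x^a) = x^(u j)`). -/
def IsDecomp {n m : ℕ} (u : Fin m → (Fin n → ℕ)) (a : Fin n → ℕ) (j : Fin m) : Prop :=
  (∃ c, a = u j + c) ∧ ∀ i : Fin m, i < j → ¬ ∃ c, a = u i + c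

/-- A monomial ideal with linear quotients: minimal monomial generators `x^(u 0), …, x^(u (m-1))`
(recorded by their exponent vectors) such that each colon ideal
`((u_0,…,u_{j-1}) : u_j)` is generated by the variables `x_s`, `s ∈ setu j`.
The membership of a monomial `x^w` in the colon ideal is recorded combinatorially. -/
structure LinearQuotients (n m : ℕ) where
  u : Fin m → (Fin n → ℕ)
  setu : Fin m → Finset (Fin n)
  colon : ∀ (j : Fin m) (w : Fin n → ℕ),
    (∃ i : Fin m, i < j ∧ ∃ c, w + u j = u i + c) ↔ ∃ s ∈ setu j, 1 ≤ w s

/-- The decomposition function is regular: `set(g(x_s * u)) ⊆ set(u)` for all `s ∈ set(u)`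
and all minimal generators `u`. -/
def LinearQuotients.Regular {n m : ℕ} (L : LinearQuotients n m) : Prop :=
  ∀ (j : Fin m), ∀ s ∈ L.setu j, ∀ j' : Fin m,
    IsDecomp L.u (Pi.single s 1 + L.u j) j' → L.setu j' ⊆ L.setu j

/-- Key auxiliary lemma: the decomposition index of `x_s * x_t * a` equals the decomposition
index of `x_s * g(x_t * a)` when the decomposition function is regular. -/
lemma regular_decomp_aux {n m : ℕ} (L : LinearQuotients n m) (hreg : L.Regular)
    (a : Fin n → ℕ) (t s : Fin n) (jt j₁ j₂ : Fin m)
    (hjt : IsDecomp L.u (Pi.single t 1 + a) jt)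
    (h₁ : IsDecomp L.u (Pi.single s 1 + L.u jt) j₁)
    (h₂ : IsDecomp L.u (Pi.single s 1 + (Pi.single t 1 + a)) j₂) : j₁ = j₂ := by
  obtain ⟨⟨e, he⟩, hjt2⟩ := hjt
  obtain ⟨⟨f, hf⟩, h₁2⟩ := h₁
  -- u j₁ divides x_s x_t a
  have hdiv : Pi.single s 1 + (Pi.single t 1 + a) = L.u j₁ + (f + e) := by
    rw [he, ← add_assoc, hf, add_assoc]
  -- hence j₂ ≤ j₁
  have hle : ¬ j₁ < j₂ := fun h => h₂.2 j₁ h ⟨f + e, hdiv⟩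
  by_contra hne
  have hlt : j₂ < j₁ := lt_of_le_of_ne (not_lt.mp hle) (Ne.symm hne)
  -- j₁ ≤ jt
  have hj1jt : ¬ jt < j₁ := fun h => h₁2 jt h ⟨Pi.single s 1, add_comm _ _⟩
  obtain ⟨c₂, hc₂⟩ := h₂.1
  -- helper: no variable of setu jt occurs in e
  have noE : ∀ r ∈ L.setu jt, ¬ 1 ≤ e r := by
    intro r hrmem hre
    obtain ⟨i, hi, ci, hci⟩ := (L.colon jt e).mpr ⟨r, hrmem, hre⟩
    exact hjt2 i hi ⟨ci, by rw [he, add_comm (L.u jt) e]; exact hci⟩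
  -- colon at jt applied to x_s * e gives s ∈ setu jt
  have hcolon1 := (L.colon jt (Pi.single s 1 + e)).mp
    ⟨j₂, lt_of_lt_of_le hlt (not_lt.mp hj1jt),
      ⟨c₂, by rw [add_assoc, add_comm e (L.u jt), ← he]; exact hc₂⟩⟩
  obtain ⟨r, hr, hr1⟩ := hcolon1
  have hrs : r = s := by
    by_contra hne'
    refine noE r hr ?_
    have hz : (Pi.single s 1 : Fin n → ℕ) r = 0 := by simp [Pi.single_apply, hne']
    have h1r : 1 ≤ (Pi.single s 1 : Fin n → ℕ) r + e r := by simpa [Pi.add_apply] using hr1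
    omega
  subst hrs
  -- regularity: setu j₁ ⊆ setu jt
  have hsub := hreg jt r hr j₁ ⟨⟨f, hf⟩, h₁2⟩
  -- colon at j₁ applied to f * e
  have hcolon2 := (L.colon j₁ (f + e)).mp
    ⟨j₂, hlt, ⟨c₂, by rw [add_comm (f + e) (L.u j₁), ← hdiv]; exact hc₂⟩⟩
  obtain ⟨p, hp, hp1⟩ := hcolon2
  have hcases : 1 ≤ f p ∨ 1 ≤ e p := by
    have h1p : 1 ≤ f p + e p := by simpa [Pi.add_apply] using hp1
    omega
  rcases hcases with hF | hE
  · obtain ⟨i, hi, ci, hci⟩ := (L.colon j₁ f).mpr ⟨p, hp, hF⟩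
    exact h₁2 i hi ⟨ci, by rw [hf, add_comm (L.u j₁) f]; exact hci⟩
  · exact noE p (hsub hp) hE

/-- if the decomposition function is regular, then
`g(x_s * g(x_t * u)) = g(x_s * x_t * u) = g(x_t * g(x_s * u))` for all `u ∈ M(I)` and
`s, t ∈ set(g(u))`. -/
theorem regular_decomp_swap {n m : ℕ} (L : LinearQuotients n m) (hreg : L.Regular)
    (a : Fin n → ℕ) (j₀ : Fin m) (h₀ : IsDecomp L.u a j₀)
    (s t : Fin n) (hs : s ∈ L.setu j₀) (ht : t ∈ L.setu j₀)
    (jt js j₁ j₂ j₃ : Fin m)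
    (hjt : IsDecomp L.u (Pi.single t 1 + a) jt)
    (hjs : IsDecomp L.u (Pi.single s 1 + a) js)
    (h₁ : IsDecomp L.u (Pi.single s 1 + L.u jt) j₁)
    (h₂ : IsDecomp L.u (Pi.single s 1 + (Pi.single t 1 + a)) j₂)
    (h₃ : IsDecomp L.u (Pi.single t 1 + L.u js) j₃) :
    L.u j₁ = L.u j₂ ∧ L.u j₂ = L.u j₃ := by
  have e1 : j₁ = j₂ := regular_decomp_aux L hreg a t s jt j₁ j₂ hjt h₁ h₂
  have h₂' : IsDecomp L.u (Pi.single t 1 + (Pi.single s 1 + a)) j₂ := by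
    have : Pi.single t 1 + (Pi.single s 1 + a) = Pi.single s 1 + (Pi.single t 1 + a) := by
      rw [add_left_comm]
    rw [this]; exact h₂
  have e3 : j₃ = j₂ := regular_decomp_aux L hreg a s t js j₃ j₂ hjs h₃ h₂'
  exact ⟨by rw [e1], by rw [e3]⟩
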